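/- If ρ(β₁Γ⁻¹A + β₂Γ⁻¹(𝟙ᵀB₁,…,𝟙ᵀBₙ)ᵀ) < 1, then the origin is the unique fixed point in [0,1]^n of the map H(x) = H₊(β₁Γ⁻¹Ax + β₂Γ⁻¹(xᵀB₁x,…,xᵀBₙx)ᵀ); equivalently, 0 is the unique equilibrium of the simplicial SIS model in [0,1]^n. -/

import Mathlib

open Finset Matrix

section Aux

open Filter Topology ENNReal NNReal

attribute [local instance] Matrix.linftyOpNormedRing Matrix.linftyOpNormedAlgebra

variable {n : ℕ}

private lemma aux_complete : CompleteSpace (Matrix (Fin n) (Fin n) ℂ) :=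
  (by infer_instance : CompleteSpace (Fin n → Fin n → ℂ))

attribute [local instance] aux_complete

private lemma aux_entry_le (M : Matrix (Fin n) (Fin n) ℂ) (i j : Fin n) : ‖M i j‖ ≤ ‖M‖ := by
  have h1 : ‖M i j‖₊ ≤ ∑ k, ‖M i k‖₊ :=
    Finset.single_le_sum (f := fun k => ‖M i k‖₊) (fun k _ => zero_le) (mem_univ j)
  have h2 : (∑ k, ‖M i k‖₊) ≤ ‖M‖₊ := by
    rw [Matrix.linfty_opNNNorm_def]
    exact Finset.le_sup (f := fun i => ∑ j, ‖M i j‖₊) (mem_univ i)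
  exact_mod_cast h1.trans h2

private lemma aux_pow_tendsto (a : Matrix (Fin n) (Fin n) ℂ) (h : spectralRadius ℂ a < 1) :
    Tendsto (fun m : ℕ => ‖a ^ m‖) atTop (𝓝 0) := by
  obtain ⟨c, hc1, hc2⟩ := exists_between h
  lift c to ℝ≥0 using (hc2.trans_le le_top).ne
  have hgel := spectrum.pow_nnnorm_pow_one_div_tendsto_nhds_spectralRadius a
  have hev : ∀ᶠ m : ℕ in atTop, (‖a ^ m‖₊ : ℝ≥0∞) ^ (1 / (m : ℝ)) < (c : ℝ≥0∞) :=
    hgel.eventually_lt_const hc1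
  have hc2' : (c : ℝ) < 1 := by exact_mod_cast hc2
  have hbound : ∀ᶠ m : ℕ in atTop, ‖a ^ m‖ ≤ (c : ℝ) ^ m := by
    filter_upwards [hev, eventually_ge_atTop 1] with m hm hm1
    have hmpos : (0 : ℝ) < (m : ℝ) := by exact_mod_cast hm1
    have := ENNReal.rpow_lt_rpow hm hmpos
    rw [← ENNReal.rpow_mul, one_div, inv_mul_cancel₀ hmpos.ne', ENNReal.rpow_one,
      ENNReal.rpow_natCast, ← ENNReal.coe_pow, ENNReal.coe_lt_coe] at this
    have : ‖a ^ m‖₊ ≤ c ^ m := this.le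
    exact_mod_cast this
  have hg : Tendsto (fun m : ℕ => (c : ℝ) ^ m) atTop (𝓝 0) :=
    tendsto_pow_atTop_nhds_zero_of_lt_one c.coe_nonneg hc2'
  exact squeeze_zero' (Eventually.of_forall fun m => norm_nonneg _) hbound hg

/-- If `ρ(Mr) < 1`, `0 ≤ x ≤ 1` and `x ≤ Mr^m x` for all `m`, then `x ≤ 0`. -/
private lemma aux_le_zero (Mr : Matrix (Fin n) (Fin n) ℝ) (x : Fin n → ℝ)
    (hρ : spectralRadius ℂ (Mr.map Complex.ofReal) < 1)
    (hx : ∀ j, 0 ≤ x j ∧ x j ≤ 1)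
    (hpow : ∀ m : ℕ, ∀ i, x i ≤ ((Mr ^ m) *ᵥ x) i) :
    ∀ i, x i ≤ 0 := by
  intro i
  set Mc : Matrix (Fin n) (Fin n) ℂ := Mr.map Complex.ofReal with hMc
  have hmap : ∀ m : ℕ, (Mr ^ m).map Complex.ofReal = Mc ^ m := by
    intro m
    induction m with
    | zero => simp [Matrix.map_one]
    | succ m ih =>
      rw [pow_succ, pow_succ, ← ih]
      ext i j
      simp [Matrix.mul_apply, Matrix.map_apply, hMc]
  have hkey : Tendsto (fun m : ℕ => ‖Mc ^ m‖) atTop (𝓝 0) := aux_pow_tendsto Mc hρ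
  have hub : ∀ m : ℕ, x i ≤ (n : ℝ) * ‖Mc ^ m‖ := by
    intro m
    refine (hpow m i).trans ?_
    have hentry : ∀ j, |(Mr ^ m) i j| ≤ ‖Mc ^ m‖ := by
      intro j
      have h := aux_entry_le (Mc ^ m) i j
      have he : (Mc ^ m) i j = (((Mr ^ m) i j : ℝ) : ℂ) := by rw [← hmap m]; rfl
      rwa [he, Complex.norm_real, Real.norm_eq_abs] at h
    calc ((Mr ^ m) *ᵥ x) i = ∑ j, (Mr ^ m) i j * x j := by
          simp [Matrix.mulVec, dotProduct]
      _ ≤ ∑ j, ‖Mc ^ m‖ * 1 := by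
          refine Finset.sum_le_sum fun j _ => (le_abs_self _).trans ?_
          rw [abs_mul]
          exact mul_le_mul (hentry j)
            (abs_le.2 ⟨by linarith [(hx j).1], (hx j).2⟩) (abs_nonneg _) (norm_nonneg _)
      _ = (n : ℝ) * ‖Mc ^ m‖ := by simp [mul_comm]
  have htend : Tendsto (fun m : ℕ => (n : ℝ) * ‖Mc ^ m‖) atTop (𝓝 0) := by
    simpa using hkey.const_mul (n : ℝ)
  exact ge_of_tendsto htend (Filter.Eventually.of_forall hub)

end Aux

/-- If `ρ(β₁Γ⁻¹A + β₂Γ⁻¹(𝟙ᵀB₁,…,𝟙ᵀBₙ)ᵀ) < 1`, then the origin is the unique fixed point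
in `[0,1]^n` of the map `H(x) = H₊(β₁Γ⁻¹Ax + β₂Γ⁻¹(xᵀB₁x,…,xᵀBₙx)ᵀ)`, i.e. the unique
equilibrium of the simplicial SIS model in `[0,1]^n`. -/
theorem disease_free_unique_fixed_point {n : ℕ} (γ : Fin n → ℝ) (hγ : ∀ i, 0 < γ i)
    (β₁ β₂ : ℝ) (hβ₁ : 0 < β₁) (hβ₂ : 0 < β₂)
    (A : Matrix (Fin n) (Fin n) ℝ) (hA : ∀ i j, 0 ≤ A i j)
    (B : Fin n → Matrix (Fin n) (Fin n) ℝ) (hB : ∀ i j k, 0 ≤ B i j k)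
    (hρ : spectralRadius ℂ
        ((Matrix.of fun i j : Fin n =>
          β₁ / γ i * A i j + β₂ / γ i * ∑ k, B i k j).map Complex.ofReal) < 1) :
    ∀ x : Fin n → ℝ, (∀ i, 0 ≤ x i ∧ x i ≤ 1) →
      (∀ i, (fun z : ℝ => z / (1 + z))
          ((β₁ / γ i) * (∑ j, A i j * x j)
            + (β₂ / γ i) * (∑ j, ∑ k, x j * B i j k * x k)) = x i) →
      x = 0 := by
  intro x hx hfix
  set Mr : Matrix (Fin n) (Fin n) ℝ :=
    Matrix.of fun i j : Fin n => β₁ / γ i * A i j + β₂ / γ i * ∑ k, B i k j with hMr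
  have hMrnn : ∀ i j, 0 ≤ Mr i j := by
    intro i j
    have h1 : 0 ≤ β₁ / γ i := le_of_lt (div_pos hβ₁ (hγ i))
    have h2 : 0 ≤ β₂ / γ i := le_of_lt (div_pos hβ₂ (hγ i))
    exact add_nonneg (mul_nonneg h1 (hA i j))
      (mul_nonneg h2 (Finset.sum_nonneg fun k _ => hB i k j))
  -- `x ≤ Mr *ᵥ x` entrywise
  have hxle : ∀ i, x i ≤ (Mr *ᵥ x) i := by
    intro i
    set z : ℝ := (β₁ / γ i) * (∑ j, A i j * x j)
      + (β₂ / γ i) * (∑ j, ∑ k, x j * B i j k * x k) with hz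
    have h1 : 0 ≤ β₁ / γ i := le_of_lt (div_pos hβ₁ (hγ i))
    have h2 : 0 ≤ β₂ / γ i := le_of_lt (div_pos hβ₂ (hγ i))
    have hznn : 0 ≤ z := by
      apply add_nonneg
      · exact mul_nonneg h1 (Finset.sum_nonneg fun j _ => mul_nonneg (hA i j) (hx j).1)
      · refine mul_nonneg h2 (Finset.sum_nonneg fun j _ => Finset.sum_nonneg fun k _ => ?_)
        exact mul_nonneg (mul_nonneg (hx j).1 (hB i j k)) (hx k).1
    have hxi : x i = z / (1 + z) := (hfix i).symm
    have hle1 : x i ≤ z := by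
      rw [hxi]
      exact div_le_self hznn (by linarith)
    refine hle1.trans ?_
    have hmv : (Mr *ᵥ x) i = ∑ j, (β₁ / γ i * A i j + β₂ / γ i * ∑ k, B i k j) * x j := by
      simp [Matrix.mulVec, dotProduct, hMr]
    rw [hmv]
    have hswap : ∑ j, ∑ k, B i j k * x k = ∑ j, (∑ k, B i k j) * x j := by
      rw [Finset.sum_comm]
      simp_rw [Finset.sum_mul]
    have hs2 : ∑ j, ∑ k, x j * B i j k * x k ≤ ∑ j, (∑ k, B i k j) * x j := by
      rw [← hswap]
      refine Finset.sum_le_sum fun j _ => Finset.sum_le_sum fun k _ => ?_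
      rw [mul_assoc]
      exact mul_le_of_le_one_left (mul_nonneg (hB i j k) (hx k).1) (hx j).2
    calc z ≤ (β₁ / γ i) * (∑ j, A i j * x j) + (β₂ / γ i) * ∑ j, (∑ k, B i k j) * x j := by
            rw [hz]; exact add_le_add (le_refl _) (mul_le_mul_of_nonneg_left hs2 h2)
      _ = ∑ j, (β₁ / γ i * A i j + β₂ / γ i * ∑ k, B i k j) * x j := by
            rw [Finset.mul_sum, Finset.mul_sum, ← Finset.sum_add_distrib]
            congr 1; funext j; ring
  have hmono : ∀ u v : Fin n → ℝ, (∀ i, u i ≤ v i) → ∀ i, (Mr *ᵥ u) i ≤ (Mr *ᵥ v) i := by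
    intro u v huv i
    simp only [Matrix.mulVec, dotProduct]
    exact Finset.sum_le_sum fun j _ => mul_le_mul_of_nonneg_left (huv j) (hMrnn i j)
  have hpow : ∀ m : ℕ, ∀ i, x i ≤ ((Mr ^ m) *ᵥ x) i := by
    intro m
    induction m with
    | zero => intro i; simp [Matrix.one_mulVec]
    | succ m ih =>
      intro i
      calc x i ≤ (Mr *ᵥ x) i := hxle i
        _ ≤ (Mr *ᵥ ((Mr ^ m) *ᵥ x)) i := hmono _ _ ih i
        _ = ((Mr ^ (m + 1)) *ᵥ x) i := by rw [Matrix.mulVec_mulVec, ← pow_succ']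
  funext i
  exact le_antisymm (aux_le_zero Mr x hρ hx hpow i) (hx i).1
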